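/- One has c_p = 1 + ⟨ρ, w_p(α_p^∨)⟩; equivalently, writing w_p(α_p^∨) = α_p^∨ + γ^∨ with γ^∨ = w_p(α_p^∨) − α_p^∨, one has c_p = 2 + ⟨ρ, γ^∨⟩. -/

import Mathlib

open scoped Classical RealInnerProductSpace

noncomputable section

namespace Weng

/-- The completed Riemann zeta function `ζ̂(s) = π^(-s/2) Γ(s/2) ζ(s)`. -/
def zetaHat (s : ℂ) : ℂ := completedRiemannZeta s

/-- The entire Riemann xi function `ξ(s) = s (s-1) ζ̂(s)`
(written in terms of the entire function `Λ₀` so that the removable singularities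
at `s = 0, 1` are correctly filled in). -/
def xi (s : ℂ) : ℂ := s * (s - 1) * completedRiemannZeta₀ s + 1

variable (V : Type) [NormedAddCommGroup V] [InnerProductSpace ℝ V] [FiniteDimensional ℝ V]

/-- The coroot `α^∨ = 2 α / ⟨α, α⟩` of a vector `α`. -/
def coroot (α : V) : V := (2 / ⟪α, α⟫) • α

/-- Reflection in the hyperplane orthogonal to `α`. -/
def srefl (α : V) : V ≃ₗᵢ[ℝ] V := Submodule.reflection (ℝ ∙ α)ᗮ

variable {V}

/-- A reduced irreducible crystallographic root system `Φ` in a finite dimensional real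
inner product space `V`, together with a fundamental system `Δ = {α_1, …, α_r}` (indexed by
`Fin r`), the corresponding positive system `Φ⁺` (`Pos`), and the fundamental weights
`λ_1, …, λ_r` (`fw`). -/
structure RootSystemData (V : Type) [NormedAddCommGroup V] [InnerProductSpace ℝ V]
    [FiniteDimensional ℝ V] : Type where
  /-- the rank -/
  r : ℕ
  /-- the root system -/
  Φ : Finset V
  /-- the simple roots -/
  Δ : Fin r → V
  /-- the positive roots -/
  Pos : Finset V
  /-- the fundamental weights -/
  fw : Fin r → V
  hΔinj : Function.Injective Δ
  hΔPos : ∀ j, Δ j ∈ Pos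
  hspan : Submodule.span ℝ (Φ : Set V) = ⊤
  hzero : (0 : V) ∉ Φ
  hreduced : ∀ α ∈ Φ, ∀ t : ℝ, t • α ∈ (Φ : Set V) → t = 1 ∨ t = -1
  hcrys : ∀ α ∈ Φ, ∀ β ∈ Φ, ∃ n : ℤ, ⟪β, coroot V α⟫ = (n : ℝ)
  hrefl : ∀ α ∈ Φ, ∀ β ∈ Φ, β - ⟪β, coroot V α⟫ • α ∈ Φ
  hirred : ∀ S T : Finset V, S ∪ T = Φ → (∀ a ∈ S, ∀ b ∈ T, ⟪a, b⟫ = 0) →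
    S = ∅ ∨ T = ∅
  hPosSub : Pos ⊆ Φ
  hNegSub : ∀ α ∈ Pos, -α ∈ Φ
  hPosDec : ∀ α ∈ Φ, (α ∈ Pos ∧ -α ∉ Pos) ∨ (α ∉ Pos ∧ -α ∈ Pos)
  hPosComb : ∀ α ∈ Pos, ∃ c : Fin r → ℕ, α = ∑ j, (c j : ℝ) • Δ j
  hfw : ∀ i j, ⟪fw i, coroot V (Δ j)⟫ = if i = j then 1 else 0

namespace RootSystemData

variable {V : Type} [NormedAddCommGroup V] [InnerProductSpace ℝ V] [FiniteDimensional ℝ V]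
variable (d : RootSystemData V)

/-- The set `Φ⁻ = -Φ⁺` of negative roots, as a `Finset`. -/
def NegS : Finset V := d.Pos.image (fun α => -α)

/-- The Weyl vector `ρ = (1/2) Σ_{α ∈ Φ⁺} α`. -/
def rho : V := (2⁻¹ : ℝ) • ∑ α ∈ d.Pos, α

/-- The height `ht α^∨ = ⟨ρ, α^∨⟩` of the coroot of `α`. -/
def ht (α : V) : ℝ := ⟪d.rho, coroot V α⟫

/-- The Weyl group `W`, as the subgroup of the group of linear isometries of `V`
generated by the reflections in the simple roots. -/
def W : Subgroup (V ≃ₗᵢ[ℝ] V) := Subgroup.closure (Set.range fun j => srefl V (d.Δ j))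

/-- The subset `Δ_p = Δ \ {α_p}` of the simple roots, as a set of vectors. -/
def DeltaP (p : Fin d.r) : Set V := d.Δ '' {j | j ≠ p}

/-- `Δ_p` as a `Finset`. -/
def DeltaPFin (p : Fin d.r) : Finset V := (Finset.univ.filter (fun j => j ≠ p)).image d.Δ

/-- The subgroup `W_p` of `W` generated by the reflections in the simple roots in `Δ_p`. -/
def Wp (p : Fin d.r) : Subgroup (V ≃ₗᵢ[ℝ] V) :=
  Subgroup.closure ((fun j => srefl V (d.Δ j)) '' {j | j ≠ p})

/-- The root subsystem `Φ_p = Φ ∩ span_ℝ(Δ_p)`. -/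
def PhiP (p : Fin d.r) : Finset V :=
  d.Φ.filter (fun α => α ∈ Submodule.span ℝ (d.DeltaP p))

/-- The positive system `Φ_p⁺ = Φ⁺ ∩ Φ_p` of `Φ_p`. -/
def PhiPpos (p : Fin d.r) : Finset V := d.Pos ∩ d.PhiP p

/-- `ρ_p = (1/2) Σ_{α ∈ Φ_p⁺} α`. -/
def rhoP (p : Fin d.r) : V := (2⁻¹ : ℝ) • ∑ α ∈ d.PhiPpos p, α

/-- The constant `c_p = 2 ⟨λ_p - ρ_p, α_p^∨⟩`. -/
def cp (p : Fin d.r) : ℝ := 2 * ⟪d.fw p - d.rhoP p, coroot V (d.Δ p)⟫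

/-- The set `𝔚_p = {w ∈ W : Δ_p ⊆ w⁻¹(Δ ∪ Φ⁻)}`. -/
def frakW (p : Fin d.r) : Set (V ≃ₗᵢ[ℝ] V) :=
  {w | w ∈ d.W ∧ ∀ j : Fin d.r, j ≠ p →
    (w (d.Δ j) ∈ Set.range d.Δ ∨ w (d.Δ j) ∈ d.NegS)}

/-- `l_p(w) = |(Φ⁺ \ Φ_p⁺) ∩ w⁻¹ Φ⁻|`. -/
def lp (p : Fin d.r) (w : V ≃ₗᵢ[ℝ] V) : ℕ :=
  ((d.Pos \ d.PhiPpos p).filter (fun α => w α ∈ d.NegS)).card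

/-- `N_{p,w}(k,h) = #{α ∈ w⁻¹Φ⁻ : ⟨λ_p, α^∨⟩ = k, ht α^∨ = h}`. -/
def Npw (p : Fin d.r) (w : V ≃ₗᵢ[ℝ] V) (k h : ℝ) : ℕ :=
  (d.Φ.filter (fun α => w α ∈ d.NegS ∧ ⟪d.fw p, coroot V α⟫ = k ∧ d.ht α = h)).card

/-- `N_p(k,h) = #{α ∈ Φ : ⟨λ_p, α^∨⟩ = k, ht α^∨ = h}`. -/
def Np (p : Fin d.r) (k h : ℝ) : ℕ :=
  (d.Φ.filter (fun α => ⟪d.fw p, coroot V α⟫ = k ∧ d.ht α = h)).card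

/-- `M_p(k,h) = max_{w ∈ 𝔚_p} (N_{p,w}(k,h-1) - N_{p,w}(k,h))`. -/
def Mp (p : Fin d.r) (k h : ℝ) : ℤ :=
  sSup {n : ℤ | ∃ w ∈ d.frakW p, n = (d.Npw p w k (h - 1) : ℤ) - (d.Npw p w k h : ℤ)}

/-- The period `ω_p(s)`. -/
def omegaP (p : Fin d.r) (s : ℂ) : ℂ :=
  ∑ᶠ w ∈ d.frakW p,
    (∏ α ∈ d.Φ.filter (fun α => w α ∈ Set.range d.Δ ∧ α ∉ d.DeltaP p),
        ((⟪d.fw p, coroot V α⟫ : ℂ) * s + (d.ht α : ℂ) - 1)⁻¹) *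
    (∏ α ∈ d.Pos.filter (fun α => w α ∈ d.NegS ∧ α ∉ d.DeltaP p),
        zetaHat ((⟪d.fw p, coroot V α⟫ : ℂ) * s + (d.ht α : ℂ))) *
    (∏ α ∈ d.Φ.filter (fun α => -α ∈ d.Pos ∧ w (-α) ∈ d.NegS),
        (zetaHat ((⟪d.fw p, coroot V α⟫ : ℂ) * s + (d.ht α : ℂ)))⁻¹)

/-- The Weng zeta function
`ζ̂_p(s) = ω_p(s) ∏_{k ≥ 0} ∏_{h ≥ 2} ζ̂(k s + h)^{M_p(k,h)}`
(the product is finite: `M_p(k,h) = 0` outside of the displayed finite range). -/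
def zetaWeng (p : Fin d.r) (s : ℂ) : ℂ :=
  d.omegaP p s *
    ∏ k ∈ Finset.range (d.Φ.card + 2), ∏ h ∈ Finset.range (d.Φ.card + 2),
      (if 2 ≤ h then zetaHat ((k : ℂ) * s + (h : ℂ)) ^ (d.Mp p (k : ℝ) (h : ℝ)) else 1)


/-- `δ_{α,w} = 1` if `α ∈ w⁻¹Φ⁺`, and `δ_{α,w} = 0` if `α ∈ w⁻¹Φ⁻`. -/
def deltaIdx (w : V ≃ₗᵢ[ℝ] V) (α : V) : ℕ := if w α ∈ d.Pos then 1 else 0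

/-- `X̃_{p,w}(s) = ξ(2)^{|Δ_p ∩ w⁻¹Φ⁺|} ∏_{α ∈ Φ⁺ \ Δ_p} ξ(⟨λ_p,α^∨⟩ s + ht α^∨ + δ_{α,w})`. -/
def Xtilde (p : Fin d.r) (w : V ≃ₗᵢ[ℝ] V) (s : ℂ) : ℂ :=
  xi 2 ^ ((d.DeltaPFin p).filter (fun α => w α ∈ d.Pos)).card *
  ∏ α ∈ d.Pos.filter (fun α => α ∉ d.DeltaP p),
    xi ((⟪d.fw p, coroot V α⟫ : ℂ) * s + (d.ht α : ℂ) + (d.deltaIdx w α : ℂ))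

/-- The polynomial factor attached to a single `v ∈ 𝔚_p` appearing in `Q̃_{p,w}` and `Q_p`. -/
def Qfactor (p : Fin d.r) (v : V ≃ₗᵢ[ℝ] V) (s : ℂ) : ℂ :=
  (2 : ℂ) ^ ((d.DeltaPFin p).filter (fun α => v α ∈ d.Pos)).card *
  (∏ α ∈ d.Φ.filter (fun α => v α ∈ Set.range d.Δ ∧ α ∉ d.DeltaP p),
      ((⟪d.fw p, coroot V α⟫ : ℂ) * s + (d.ht α : ℂ) - 1)) *
  ∏ α ∈ d.Pos.filter (fun α => α ∉ d.DeltaP p),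
    ((⟪d.fw p, coroot V α⟫ : ℂ) * s + (d.ht α : ℂ) + (d.deltaIdx v α : ℂ)) *
      ((⟪d.fw p, coroot V α⟫ : ℂ) * s + (d.ht α : ℂ) + (d.deltaIdx v α : ℂ) - 1)

/-- The polynomial `Q̃_{p,w}(s)` (product of the `Qfactor`s over all `v ∈ 𝔚_p`, `v ≠ w`). -/
def Qtilde (p : Fin d.r) (w : V ≃ₗᵢ[ℝ] V) (s : ℂ) : ℂ :=
  ∏ᶠ v ∈ d.frakW p \ {w}, d.Qfactor p v s

/-- The polynomial `Q_p(s)` (product of the `Qfactor`s over all `v ∈ 𝔚_p`). -/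
def Qp (p : Fin d.r) (s : ℂ) : ℂ := ∏ᶠ v ∈ d.frakW p, d.Qfactor p v s

/-- The entire function `X_p(s) = Σ_{w ∈ 𝔚_p} Q̃_{p,w}(s) X̃_{p,w}(s)`. -/
def Xp (p : Fin d.r) (s : ℂ) : ℂ := ∑ᶠ w ∈ d.frakW p, d.Qtilde p w s * d.Xtilde p w s

/-- `X_{p,w}(s) = ∏_{α ∈ Φ⁺ \ Φ_p⁺} ξ(⟨λ_p,α^∨⟩ s + ht α^∨ + δ_{α,w})`. -/
def Xpw (p : Fin d.r) (w : V ≃ₗᵢ[ℝ] V) (s : ℂ) : ℂ :=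
  ∏ α ∈ d.Pos \ d.PhiPpos p,
    xi ((⟪d.fw p, coroot V α⟫ : ℂ) * s + (d.ht α : ℂ) + (d.deltaIdx w α : ℂ))

/-- The constant `C_{p,w} = ξ(2)^{|Δ_p ∩ w⁻¹Φ⁺|} ∏_{α ∈ Φ_p⁺ \ Δ_p} ξ(ht α^∨ + δ_{α,w})`. -/
def Cpw (p : Fin d.r) (w : V ≃ₗᵢ[ℝ] V) : ℂ :=
  xi 2 ^ ((d.DeltaPFin p).filter (fun α => w α ∈ d.Pos)).card *
  ∏ α ∈ (d.PhiPpos p).filter (fun α => α ∉ d.DeltaP p),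
    xi ((d.ht α : ℂ) + (d.deltaIdx w α : ℂ))

/-- `Q_{p,w}(s) = C_{p,w} Q̃_{p,w}(s)`. -/
def Qpw (p : Fin d.r) (w : V ≃ₗᵢ[ℝ] V) (s : ℂ) : ℂ := d.Cpw p w * d.Qtilde p w s

/-- `𝔚_p⁺ = {w ∈ 𝔚_p : l_p(w) < |Φ⁺ \ Φ_p⁺| / 2}`. -/
def frakWplus (p : Fin d.r) : Set (V ≃ₗᵢ[ℝ] V) :=
  {w ∈ d.frakW p | 2 * d.lp p w < (d.Pos \ d.PhiPpos p).card}

/-- `𝔚_p⁰ = {w ∈ 𝔚_p : l_p(w) = |Φ⁺ \ Φ_p⁺| / 2}`. -/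
def frakWzero (p : Fin d.r) : Set (V ≃ₗᵢ[ℝ] V) :=
  {w ∈ d.frakW p | 2 * d.lp p w = (d.Pos \ d.PhiPpos p).card}

/-- `𝔚_p‡ = {w ∈ 𝔚_p : l_p(w) = 0}`. -/
def frakWdag (p : Fin d.r) : Set (V ≃ₗᵢ[ℝ] V) :=
  {w ∈ d.frakW p | d.lp p w = 0}

/-- `E_p(s) = Σ_{w ∈ 𝔚_p⁺} Q_{p,w}(s) X_{p,w}(s) + (1/2) Σ_{w ∈ 𝔚_p⁰} Q_{p,w}(s) X_{p,w}(s)`. -/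
def Ep (p : Fin d.r) (s : ℂ) : ℂ :=
  (∑ᶠ w ∈ d.frakWplus p, d.Qpw p w s * d.Xpw p w s) +
    (2 : ℂ)⁻¹ * ∑ᶠ w ∈ d.frakWzero p, d.Qpw p w s * d.Xpw p w s

end RootSystemData

end Weng

open Weng

section WengAux

open Weng

variable {V : Type} [NormedAddCommGroup V] [InnerProductSpace ℝ V] [FiniteDimensional ℝ V]

lemma Weng.srefl_apply (α x : V) : srefl V α x = x - ⟪x, coroot V α⟫ • α := by
  by_cases hα : α = 0
  · subst hα
    simp only [srefl, coroot, Submodule.span_zero_singleton, Submodule.bot_orthogonal_eq_top,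
      inner_zero_right, smul_zero, sub_zero]
    exact Submodule.reflection_mem_subspace_eq_self Submodule.mem_top
  · have h1 : srefl V α x = 2 • ((ℝ ∙ α)ᗮ.starProjection x) - x :=
      Submodule.reflection_apply _
    rw [h1, Submodule.starProjection_orthogonal_val, Submodule.starProjection_singleton]
    have hsq : ⟪α, α⟫ = (‖α‖ : ℝ) ^ 2 := real_inner_self_eq_norm_sq α
    have hne : (‖α‖ : ℝ) ^ 2 ≠ 0 := by simpa using hα
    rw [coroot, real_inner_smul_right, real_inner_comm x α, two_smul, hsq]
    field_simp
    module

lemma Weng.sum_image_eq {S : Finset V} {g : V → V} (hinj : Function.Injective g)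
    (hmaps : ∀ β ∈ S, g β ∈ S) : ∑ β ∈ S, g β = ∑ β ∈ S, β := by
  have himg : S.image g = S := by
    apply Finset.eq_of_subset_of_card_le
    · intro γ hγ
      obtain ⟨β, hβ, rfl⟩ := Finset.mem_image.1 hγ
      exact hmaps β hβ
    · rw [Finset.card_image_of_injective _ hinj]
  conv_rhs => rw [← himg]
  rw [Finset.sum_image (fun x _ y _ h => hinj h)]

namespace Weng.RootSystemData

variable (d : RootSystemData V)

lemma delta_mem_Phi (j : Fin d.r) : d.Δ j ∈ d.Φ := d.hPosSub (d.hΔPos j)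

lemma delta_ne_zero (j : Fin d.r) : d.Δ j ≠ 0 := fun h => d.hzero (h ▸ d.delta_mem_Phi j)

lemma inner_delta_self_pos (j : Fin d.r) : 0 < ⟪d.Δ j, d.Δ j⟫ := by
  rw [real_inner_self_eq_norm_sq]
  exact pow_pos (norm_pos_iff.2 (d.delta_ne_zero j)) 2

lemma fw_inner_delta (i j : Fin d.r) :
    ⟪d.fw i, d.Δ j⟫ = if i = j then ⟪d.Δ j, d.Δ j⟫ / 2 else 0 := by
  have h := d.hfw i j
  rw [coroot, real_inner_smul_right] at h
  have hne : ⟪d.Δ j, d.Δ j⟫ ≠ 0 := (d.inner_delta_self_pos j).ne'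
  split_ifs with hij <;> split_ifs at h <;> field_simp at h <;> linarith

lemma fw_inner_delta_nonneg (i j : Fin d.r) : 0 ≤ ⟪d.fw i, d.Δ j⟫ := by
  rw [d.fw_inner_delta i j]
  split_ifs with h
  · linarith [d.inner_delta_self_pos j]
  · exact le_refl 0

lemma fw_inner_delta_self_pos (i : Fin d.r) : 0 < ⟪d.fw i, d.Δ i⟫ := by
  rw [d.fw_inner_delta i i, if_pos rfl]
  linarith [d.inner_delta_self_pos i]

lemma pos_coeffs {β : V} (hβ : β ∈ d.Pos) :
    ∃ c : Fin d.r → ℝ, (∀ i, 0 ≤ c i) ∧ β = ∑ j, c j • d.Δ j ∧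
      ∀ i, ⟪d.fw i, β⟫ = c i * ⟪d.fw i, d.Δ i⟫ := by
  obtain ⟨c, hc⟩ := d.hPosComb β hβ
  refine ⟨fun j => (c j : ℝ), fun i => (c i).cast_nonneg, hc, fun i => ?_⟩
  rw [hc, inner_sum]
  rw [Finset.sum_eq_single i]
  · rw [real_inner_smul_right]
  · intro j _ hj
    rw [real_inner_smul_right, d.fw_inner_delta i j, if_neg (Ne.symm hj), mul_zero]
  · intro h; exact absurd (Finset.mem_univ i) h

lemma pos_inner_fw_nonneg {β : V} (hβ : β ∈ d.Pos) (i : Fin d.r) : 0 ≤ ⟪d.fw i, β⟫ := by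
  obtain ⟨c, hcnn, _, hin⟩ := d.pos_coeffs hβ
  rw [hin i]
  exact mul_nonneg (hcnn i) (d.fw_inner_delta_nonneg i i)

lemma pos_eq_delta_of {β : V} (hβ : β ∈ d.Pos) (j : Fin d.r)
    (h : ∀ i, i ≠ j → ⟪d.fw i, β⟫ = 0) : β = d.Δ j := by
  obtain ⟨c, hcnn, hsum, hin⟩ := d.pos_coeffs hβ
  have hci : ∀ i, i ≠ j → c i = 0 := by
    intro i hi
    have h1 := hin i
    rw [h i hi] at h1
    have := d.fw_inner_delta_self_pos i
    rcases mul_eq_zero.1 h1.symm with h2 | h2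
    · exact h2
    · exact absurd h2 this.ne'
  have hβj : β = c j • d.Δ j := by
    rw [hsum, Finset.sum_eq_single j]
    · intro i _ hi; rw [hci i hi, zero_smul]
    · intro h; exact absurd (Finset.mem_univ j) h
  have hred := d.hreduced (d.Δ j) (d.delta_mem_Phi j) (c j)
      (by rw [← hβj]; exact_mod_cast d.hPosSub hβ)
  rcases hred with h1 | h1
  · rw [hβj, h1, one_smul]
  · exfalso; have := hcnn j; rw [h1] at this; linarith

lemma srefl_delta_self (j : Fin d.r) : srefl V (d.Δ j) (d.Δ j) = -(d.Δ j) :=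
  Submodule.reflection_orthogonalComplement_singleton_eq_neg (d.Δ j)

lemma srefl_pos {j : Fin d.r} {β : V} (hβ : β ∈ d.Pos) (hne : β ≠ d.Δ j) :
    srefl V (d.Δ j) β ∈ d.Pos ∧ srefl V (d.Δ j) β ≠ d.Δ j := by
  constructor
  · set c := ⟪β, coroot V (d.Δ j)⟫ with hc
    have hform : srefl V (d.Δ j) β = β - c • d.Δ j := srefl_apply _ _
    have hγΦ : β - c • d.Δ j ∈ d.Φ := d.hrefl (d.Δ j) (d.delta_mem_Phi j) β (d.hPosSub hβ)
    rw [hform]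
    by_contra hγ
    have hneg : -(β - c • d.Δ j) ∈ d.Pos := by
      rcases d.hPosDec _ hγΦ with ⟨h1, _⟩ | ⟨_, h2⟩
      · exact absurd h1 hγ
      · exact h2
    have hzero : ∀ i, i ≠ j → ⟪d.fw i, β⟫ = 0 := by
      intro i hi
      have h1 : ⟪d.fw i, β⟫ + ⟪d.fw i, -(β - c • d.Δ j)⟫ = 0 := by
        rw [← inner_add_right]
        have : β + -(β - c • d.Δ j) = c • d.Δ j := by abel
        rw [this, real_inner_smul_right, d.fw_inner_delta i j, if_neg hi, mul_zero]
      have h2 := d.pos_inner_fw_nonneg hβ i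
      have h3 := d.pos_inner_fw_nonneg hneg i
      linarith
    exact hne (d.pos_eq_delta_of hβ j hzero)
  · intro h
    have : β = srefl V (d.Δ j) (d.Δ j) := by
      have h2 : (srefl V (d.Δ j)).symm (srefl V (d.Δ j) β) = (srefl V (d.Δ j)).symm (d.Δ j) := by
        rw [h]
      rw [LinearIsometryEquiv.symm_apply_apply] at h2
      have h3 : (srefl V (d.Δ j)).symm = srefl V (d.Δ j) := Submodule.reflection_symm
      rw [h2, h3]
    rw [d.srefl_delta_self j] at this
    rcases d.hPosDec (d.Δ j) (d.delta_mem_Phi j) with ⟨_, h2⟩ | ⟨h2, _⟩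
    · exact h2 (this ▸ hβ)
    · exact h2 (d.hΔPos j)

lemma srefl_mem_Phi {j : Fin d.r} {β : V} (hβ : β ∈ d.Φ) : srefl V (d.Δ j) β ∈ d.Φ := by
  rw [srefl_apply]
  exact d.hrefl (d.Δ j) (d.delta_mem_Phi j) β hβ

lemma image_Phi_of_mem_Wp {p : Fin d.r} {w : V ≃ₗᵢ[ℝ] V} (hw : w ∈ d.Wp p) :
    d.Φ.image (⇑w) = d.Φ := by
  refine Subgroup.closure_induction ?_ ?_ ?_ ?_ hw
  · rintro x ⟨j, hj, rfl⟩
    apply Finset.eq_of_subset_of_card_le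
    · intro γ hγ
      obtain ⟨β, hβ, rfl⟩ := Finset.mem_image.1 hγ
      exact d.srefl_mem_Phi hβ
    · rw [Finset.card_image_of_injective _ (EquivLike.injective _)]
  · simp
  · intro x y _ _ hx hy
    rw [LinearIsometryEquiv.coe_mul, ← Finset.image_image, hy, hx]
  · intro x _ hx
    conv_lhs => rw [← hx]
    rw [Finset.image_image]
    have hcomp : (⇑x⁻¹ ∘ ⇑x) = id := by
      funext v
      simp [LinearIsometryEquiv.coe_inv]
    rw [hcomp, Finset.image_id]

lemma mem_Phi_of_mem_Wp {p : Fin d.r} {w : V ≃ₗᵢ[ℝ] V} (hw : w ∈ d.Wp p) {β : V}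
    (hβ : β ∈ d.Φ) : w β ∈ d.Φ := by
  rw [← d.image_Phi_of_mem_Wp hw]
  exact Finset.mem_image_of_mem _ hβ

lemma wp_fix {p : Fin d.r} {x : V} (hx : ∀ j, j ≠ p → ⟪d.Δ j, x⟫ = 0) :
    ∀ w ∈ d.Wp p, w x = x := by
  intro w hw
  refine Subgroup.closure_induction ?_ ?_ ?_ ?_ hw
  · rintro g ⟨j, hj, rfl⟩
    show Submodule.reflection (ℝ ∙ (d.Δ j))ᗮ x = x
    exact Submodule.reflection_mem_subspace_eq_self
      (Submodule.mem_orthogonal_singleton_iff_inner_right.2 (hx j hj))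
  · simp
  · intro a b _ _ ha hb
    rw [LinearIsometryEquiv.coe_mul, Function.comp_apply, hb, ha]
  · intro a _ ha
    conv_lhs => rw [← ha]
    simp [LinearIsometryEquiv.coe_inv]


lemma inner_coroot_eq_one_of {S : Finset V} {j : Fin d.r} (hmem : d.Δ j ∈ S)
    (hmaps : ∀ β ∈ S.erase (d.Δ j), srefl V (d.Δ j) β ∈ S.erase (d.Δ j)) :
    ⟪(2⁻¹ : ℝ) • ∑ β ∈ S, β, coroot V (d.Δ j)⟫ = 1 := by
  have hsum : ∑ β ∈ S.erase (d.Δ j), srefl V (d.Δ j) β = ∑ β ∈ S.erase (d.Δ j), β :=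
    sum_image_eq (EquivLike.injective _) hmaps
  have e1 : ∑ β ∈ S, srefl V (d.Δ j) β
      = (∑ β ∈ S.erase (d.Δ j), srefl V (d.Δ j) β) + srefl V (d.Δ j) (d.Δ j) :=
    (Finset.sum_erase_add _ _ hmem).symm
  have e2 : ∑ β ∈ S.erase (d.Δ j), β = (∑ β ∈ S, β) - d.Δ j :=
    eq_sub_of_add_eq (Finset.sum_erase_add _ _ hmem)
  have e3 : srefl V (d.Δ j) (∑ β ∈ S, β) = (∑ β ∈ S, β) - d.Δ j - d.Δ j := by
    rw [map_sum, e1, hsum, e2, d.srefl_delta_self]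
    abel
  have e4 : srefl V (d.Δ j) ((2⁻¹ : ℝ) • ∑ β ∈ S, β)
      = (2⁻¹ : ℝ) • (∑ β ∈ S, β) - d.Δ j := by
    rw [map_smul, e3]
    module
  have e5 := srefl_apply (d.Δ j) ((2⁻¹ : ℝ) • ∑ β ∈ S, β)
  rw [e4, sub_right_inj] at e5
  have e6 : (⟪(2⁻¹ : ℝ) • ∑ β ∈ S, β, coroot V (d.Δ j)⟫ - 1) • d.Δ j = 0 := by
    rw [sub_smul, one_smul, ← e5, sub_self]
  rcases smul_eq_zero.1 e6 with h | h
  · linarith [sub_eq_zero.1 h]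
  · exact absurd h (d.delta_ne_zero j)

lemma rho_inner_coroot (j : Fin d.r) : ⟪d.rho, coroot V (d.Δ j)⟫ = 1 := by
  rw [rho]
  apply d.inner_coroot_eq_one_of (d.hΔPos j)
  intro β hβ
  obtain ⟨hne, hβP⟩ := Finset.mem_erase.1 hβ
  obtain ⟨h1, h2⟩ := d.srefl_pos hβP hne
  exact Finset.mem_erase.2 ⟨h2, h1⟩

lemma mem_PhiPpos_iff {p : Fin d.r} {β : V} : β ∈ d.PhiPpos p ↔
    β ∈ d.Pos ∧ β ∈ d.Φ ∧ β ∈ Submodule.span ℝ (d.DeltaP p) := by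
  rw [PhiPpos, Finset.mem_inter, PhiP, Finset.mem_filter]

lemma delta_mem_PhiPpos {p j : Fin d.r} (hj : j ≠ p) : d.Δ j ∈ d.PhiPpos p :=
  d.mem_PhiPpos_iff.2 ⟨d.hΔPos j, d.delta_mem_Phi j, Submodule.subset_span ⟨j, hj, rfl⟩⟩

lemma rhoP_inner_coroot {p j : Fin d.r} (hj : j ≠ p) :
    ⟪d.rhoP p, coroot V (d.Δ j)⟫ = 1 := by
  rw [rhoP]
  apply d.inner_coroot_eq_one_of (d.delta_mem_PhiPpos hj)
  intro β hβ
  obtain ⟨hne, hβPP⟩ := Finset.mem_erase.1 hβ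
  obtain ⟨hβP, hβΦ, hβsp⟩ := d.mem_PhiPpos_iff.1 hβPP
  obtain ⟨h1, h2⟩ := d.srefl_pos hβP hne
  refine Finset.mem_erase.2 ⟨h2, d.mem_PhiPpos_iff.2 ⟨h1, ?_, ?_⟩⟩
  · rw [srefl_apply]
    exact d.hrefl (d.Δ j) (d.delta_mem_Phi j) β hβΦ
  · rw [srefl_apply]
    exact Submodule.sub_mem _ hβsp
      (Submodule.smul_mem _ _ (Submodule.subset_span ⟨j, hj, rfl⟩))

lemma neg_wp_mem {p : Fin d.r} {w : V ≃ₗᵢ[ℝ] V} (hwW : w ∈ d.Wp p)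
    (hlong : ∀ j : Fin d.r, j ≠ p → -(w (d.Δ j)) ∈ d.DeltaP p)
    {β : V} (hβ : β ∈ d.PhiPpos p) : -(w β) ∈ d.PhiPpos p := by
  obtain ⟨hβP, hβΦ, hβsp⟩ := d.mem_PhiPpos_iff.1 hβ
  obtain ⟨c, hcnn, hsum, hin⟩ := d.pos_coeffs hβP
  have hneg : ∀ j : Fin d.r, j ≠ p → ∃ k : Fin d.r, k ≠ p ∧ w (d.Δ j) = -(d.Δ k) := by
    intro j hj
    obtain ⟨k, hk, hkeq⟩ := hlong j hj
    exact ⟨k, hk, by rw [hkeq, neg_neg]⟩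
  have hfwp : ⟪d.fw p, β⟫ = 0 := by
    have hle : Submodule.span ℝ (d.DeltaP p) ≤ (ℝ ∙ d.fw p)ᗮ := by
      rw [Submodule.span_le]
      rintro x ⟨j, hj, rfl⟩
      refine Submodule.mem_orthogonal_singleton_iff_inner_right.2 ?_
      rw [d.fw_inner_delta]
      exact if_neg fun h => hj h.symm
    exact Submodule.mem_orthogonal_singleton_iff_inner_right.1 (hle hβsp)
  have hcp : c p = 0 := by
    have h1 := hin p
    rw [hfwp] at h1
    rcases mul_eq_zero.1 h1.symm with h2 | h2
    · exact h2
    · exact absurd h2 (d.fw_inner_delta_self_pos p).ne'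
  have hnonpos : ∀ i, ⟪d.fw i, w β⟫ ≤ 0 := by
    intro i
    rw [hsum, map_sum, inner_sum]
    apply Finset.sum_nonpos
    intro j _
    rw [map_smul, real_inner_smul_right]
    by_cases hj : j = p
    · rw [hj, hcp]
      simp
    · obtain ⟨k, _, hkeq⟩ := hneg j hj
      rw [hkeq, inner_neg_right, mul_neg]
      exact neg_nonpos.2 (mul_nonneg (hcnn j) (d.fw_inner_delta_nonneg i k))
  have hwΦ : w β ∈ d.Φ := d.mem_Phi_of_mem_Wp hwW hβΦ
  have hnotP : w β ∉ d.Pos := by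
    intro hP
    have hall : ∀ i, ⟪d.fw i, w β⟫ = 0 :=
      fun i => le_antisymm (hnonpos i) (d.pos_inner_fw_nonneg hP i)
    have heq := d.pos_eq_delta_of hP p (fun i _ => hall i)
    have h2 := hall p
    rw [heq] at h2
    exact (d.fw_inner_delta_self_pos p).ne' h2
  have hnegP : -(w β) ∈ d.Pos := by
    rcases d.hPosDec _ hwΦ with ⟨h1, _⟩ | ⟨_, h2⟩
    · exact absurd h1 hnotP
    · exact h2
  have hspanw : w β ∈ Submodule.span ℝ (d.DeltaP p) := by
    refine Submodule.span_induction
      (p := fun x _ => w x ∈ Submodule.span ℝ (d.DeltaP p)) ?_ ?_ ?_ ?_ hβsp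
    · rintro x ⟨j, hj, rfl⟩
      obtain ⟨k, hk, hkeq⟩ := hneg j hj
      rw [hkeq]
      exact Submodule.neg_mem _ (Submodule.subset_span ⟨k, hk, rfl⟩)
    · show w (0 : V) ∈ _
      rw [map_zero]; exact Submodule.zero_mem _
    · intro x y _ _ hx hy
      show w (x + y) ∈ _
      rw [map_add]; exact Submodule.add_mem _ hx hy
    · intro a x _ hx
      show w (a • x) ∈ _
      rw [map_smul]; exact Submodule.smul_mem _ _ hx
  exact d.mem_PhiPpos_iff.2 ⟨hnegP, d.hPosSub hnegP, Submodule.neg_mem _ hspanw⟩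

lemma wp_rhoP {p : Fin d.r} {w : V ≃ₗᵢ[ℝ] V} (hwW : w ∈ d.Wp p)
    (hlong : ∀ j : Fin d.r, j ≠ p → -(w (d.Δ j)) ∈ d.DeltaP p) :
    w (d.rhoP p) = -(d.rhoP p) := by
  have hinj : Function.Injective (fun β : V => -(w β)) := by
    intro a b h
    exact w.injective (neg_injective h)
  have hsum : ∑ β ∈ d.PhiPpos p, (-(w β)) = ∑ β ∈ d.PhiPpos p, β :=
    sum_image_eq hinj (fun β hβ => d.neg_wp_mem hwW hlong hβ)
  have h2 : w (∑ β ∈ d.PhiPpos p, β) = -(∑ β ∈ d.PhiPpos p, β) := by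
    conv_rhs => rw [← hsum]
    rw [map_sum, Finset.sum_neg_distrib, neg_neg]
  rw [rhoP, map_smul, h2, smul_neg]

end Weng.RootSystemData
end WengAux

/-- `c_p = 1 + ⟨ρ, w_p(α_p^∨)⟩`; equivalently, writing `w_p(α_p^∨) = α_p^∨ + γ^∨`
with `γ^∨ = w_p(α_p^∨) - α_p^∨`, one has `c_p = 2 + ⟨ρ, γ^∨⟩`. -/
theorem weng_cp_eq_one_add_height
    {V : Type} [NormedAddCommGroup V] [InnerProductSpace ℝ V] [FiniteDimensional ℝ V]
    (d : RootSystemData V) (p : Fin d.r)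
    (wₚ : V ≃ₗᵢ[ℝ] V)
    (hwₚW : wₚ ∈ d.Wp p) (hwₚlong : ∀ j : Fin d.r, j ≠ p → -(wₚ (d.Δ j)) ∈ d.DeltaP p) :
    d.cp p = 1 + ⟪d.rho, wₚ (coroot V (d.Δ p))⟫ ∧
    d.cp p = 2 + ⟪d.rho, wₚ (coroot V (d.Δ p)) - coroot V (d.Δ p)⟫ := by
  have h1 : ∀ j, j ≠ p → ⟪d.Δ j, d.rho - d.rhoP p⟫ = 0 := by
    intro j hj
    have hco : ⟪d.rho - d.rhoP p, coroot V (d.Δ j)⟫ = 0 := by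
      rw [inner_sub_left, d.rho_inner_coroot j, d.rhoP_inner_coroot hj, sub_self]
    rw [coroot, real_inner_smul_right] at hco
    have hne : (2 / ⟪d.Δ j, d.Δ j⟫ : ℝ) ≠ 0 :=
      div_ne_zero two_ne_zero (d.inner_delta_self_pos j).ne'
    rw [real_inner_comm]
    rcases mul_eq_zero.1 hco with h | h
    · exact absurd h hne
    · exact h
  have hfix : wₚ⁻¹ (d.rho - d.rhoP p) = d.rho - d.rhoP p :=
    d.wp_fix h1 _ (inv_mem hwₚW)
  have hrp : wₚ (d.rhoP p) = -(d.rhoP p) := d.wp_rhoP hwₚW hwₚlong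
  have hrpinv : wₚ⁻¹ (d.rhoP p) = -(d.rhoP p) := by
    have h2 : wₚ⁻¹ (wₚ (d.rhoP p)) = wₚ⁻¹ (-(d.rhoP p)) := by rw [hrp]
    rw [LinearIsometryEquiv.coe_inv, LinearIsometryEquiv.symm_apply_apply, map_neg] at h2
    rw [LinearIsometryEquiv.coe_inv]
    conv_rhs => rw [h2]
    rw [neg_neg]
  have hkey : ⟪d.rho, wₚ (coroot V (d.Δ p))⟫ = ⟪wₚ⁻¹ d.rho, coroot V (d.Δ p)⟫ := by
    have h3 := LinearIsometryEquiv.inner_map_map wₚ (wₚ⁻¹ d.rho) (coroot V (d.Δ p))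
    rwa [show wₚ (wₚ⁻¹ d.rho) = d.rho from by
      rw [LinearIsometryEquiv.coe_inv, LinearIsometryEquiv.apply_symm_apply]] at h3
  have hdecomp : wₚ⁻¹ d.rho = (d.rho - d.rhoP p) - d.rhoP p := by
    have h4 : d.rho = (d.rho - d.rhoP p) + d.rhoP p := by abel
    conv_lhs => rw [h4]
    rw [map_add, hfix, hrpinv]
    abel
  have hra : ⟪d.rho, coroot V (d.Δ p)⟫ = 1 := d.rho_inner_coroot p
  have hfwa : ⟪d.fw p, coroot V (d.Δ p)⟫ = 1 := by simpa using d.hfw p p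
  have hcp : d.cp p = 2 - 2 * ⟪d.rhoP p, coroot V (d.Δ p)⟫ := by
    rw [RootSystemData.cp, inner_sub_left, hfwa]; ring
  have hmain : ⟪d.rho, wₚ (coroot V (d.Δ p))⟫ = 1 - 2 * ⟪d.rhoP p, coroot V (d.Δ p)⟫ := by
    rw [hkey, hdecomp, inner_sub_left, inner_sub_left, hra]; ring
  constructor
  · rw [hcp, hmain]; ring
  · rw [inner_sub_right, hmain, hra, hcp]; ring
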